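/- Let A = {a,b,c}, m ≥ 4 odd, and x₁, x₂, y₁, y₂ ≥ 1 with x₁ + x₂ = y₁ + y₂ = m - 3, x₁ even, and y₁ even. Then the two-sided infinite word of period 2(m-1) obtained by repeating (ab)^{(m-1)/2} (ac)^{(m-1)/2} avoids the set {b⋄^{m-2}b, c⋄^{m-2}c, a⋄^{m-2}b, a⋄^{m-2}c, a⋄^{x₁}a⋄^{x₂}a, b⋄^{y₁}c⋄^{y₂}c}. -/

import Mathlib

/-- The three-letter alphabet. -/
inductive ABC | a | b | c
deriving DecidableEq
open ABC

/-- A partial word of length `m` over alphabet `A`. -/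
abbrev PW (m : ℕ) (A : Type) := Fin m → Option A

/-- A two-sided infinite word `w` meets a partial word `u`. -/
def Meets {m : ℕ} {A : Type} (w : ℤ → A) (u : PW m A) : Prop :=
  ∃ i : ℤ, ∀ j : Fin m, ∀ x : A, u j = some x → w (i + (j : ℕ)) = x

/-- A set of partial words is unavoidable over `A`. -/
def Unavoidable {m : ℕ} {A : Type} (X : Set (PW m A)) : Prop :=
  ∀ w : ℤ → A, ∃ u ∈ X, Meets w u

/-- A set of partial words is avoidable over `A`. -/
def Avoidable {m : ℕ} {A : Type} (X : Set (PW m A)) : Prop :=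
  ∃ w : ℤ → A, ∀ u ∈ X, ¬ Meets w u

/-- The partial word `x ⋄^(m-2) y` of length `m`: first letter `x`, last letter `y`,
holes in between. -/
def oneHole {A : Type} (m : ℕ) (x y : A) : PW m A :=
  fun j => if (j : ℕ) = 0 then some x else if (j : ℕ) = m - 1 then some y else none

/-- The partial word `x ⋄^(p-1) d ⋄^(m-p-2) y` of length `m`: first letter `x`,
letter `d` at position `p`, last letter `y`, holes elsewhere. -/
def twoDef {A : Type} (m : ℕ) (x d y : A) (p : ℕ) : PW m A :=
  fun j => if (j : ℕ) = 0 then some x else if (j : ℕ) = p then some d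
    else if (j : ℕ) = m - 1 then some y else none

/-- The two-sided infinite word of period `P` repeating the block `f` (given on `[0, P)`). -/
def periodic {A : Type} (P : ℕ) (f : ℕ → A) : ℤ → A :=
  fun i => f ((i % (P : ℤ)).toNat)

def F (m : ℕ) : ℕ → ABC := fun n =>
  if n < m - 1 then (if n % 2 = 0 then a else b)
  else (if (n - (m - 1)) % 2 = 0 then a else c)

def W (m : ℕ) : ℤ → ABC := periodic (2 * (m - 1)) (F m)

lemma F_even (m n : ℕ) (hm : 4 ≤ m) (hm1 : (m - 1) % 2 = 0) (hn : n % 2 = 0) :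
    F m n = a := by
  unfold F
  split_ifs <;> first | rfl | (exfalso; omega)

lemma F_odd_lo (m n : ℕ) (hm : 4 ≤ m) (hn : n % 2 = 1) (h : n < m - 1) :
    F m n = b := by
  unfold F
  rw [if_pos h, if_neg (by omega)]

lemma F_odd_hi (m n : ℕ) (hm : 4 ≤ m) (hm1 : (m - 1) % 2 = 0) (hn : n % 2 = 1)
    (h : ¬ n < m - 1) : F m n = c := by
  unfold F
  rw [if_neg h, if_neg (by omega)]

lemma W_eq (m : ℕ) (i : ℤ) : W m i = F m ((i % ((2 * (m - 1) : ℕ) : ℤ)).toNat) := rfl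

lemma even_case (m : ℕ) (hm : 4 ≤ m) (hmo : Odd m) (i : ℤ) (hi : i % 2 = 0) :
    W m i = a := by
  obtain ⟨k, hk⟩ := hmo
  have hm1 : (m - 1) % 2 = 0 := by omega
  rw [W_eq]
  set P : ℤ := ((2 * (m - 1) : ℕ) : ℤ) with hPdef
  have hP : 0 < P := by omega
  have hmod : i % P % 2 = i % 2 := Int.emod_emod_of_dvd i ⟨((m-1:ℕ):ℤ), by push_cast; omega⟩
  have hr0 : 0 ≤ i % P := Int.emod_nonneg _ (by omega)
  exact F_even m _ hm hm1 (by omega)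

lemma odd_case (m : ℕ) (hm : 4 ≤ m) (hmo : Odd m) (i : ℤ) (hi : i % 2 = 1) :
    (W m i = b ∧ W m (i + ((m - 1 : ℕ) : ℤ)) = c) ∨
    (W m i = c ∧ W m (i + ((m - 1 : ℕ) : ℤ)) = b) := by
  obtain ⟨k, hk⟩ := hmo
  have hm1 : (m - 1) % 2 = 0 := by omega
  rw [W_eq, W_eq]
  set P : ℤ := ((2 * (m - 1) : ℕ) : ℤ) with hPdef
  have hP : 0 < P := by omega
  have hmod : i % P % 2 = i % 2 := Int.emod_emod_of_dvd i ⟨((m-1:ℕ):ℤ), by push_cast; omega⟩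
  have hr0 : 0 ≤ i % P := Int.emod_nonneg _ (by omega)
  have hrP : i % P < P := Int.emod_lt_of_pos _ hP
  have hn : (i % P).toNat % 2 = 1 := by omega
  by_cases hlt : (i % P).toNat < m - 1
  · left
    have hc : ((m - 1 : ℕ) : ℤ) % P = ((m - 1 : ℕ) : ℤ) :=
      Int.emod_eq_of_lt (by omega) (by omega)
    have h2 : (i + ((m - 1 : ℕ) : ℤ)) % P = i % P + ((m - 1 : ℕ) : ℤ) := by
      rw [Int.add_emod, hc, Int.emod_eq_of_lt (by omega) (by omega)]
    rw [h2]
    refine ⟨F_odd_lo m _ hm hn hlt, F_odd_hi m _ hm hm1 (by omega) (by omega)⟩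
  · right
    have h2 : (i + ((m - 1 : ℕ) : ℤ)) % P = i % P + ((m - 1 : ℕ) : ℤ) - P := by
      have e1 : i + ((m - 1 : ℕ) : ℤ) = (i % P + ((m - 1 : ℕ) : ℤ) - P) + P * ((i / P) + 1) := by
        have h3 : i = P * (i / P) + i % P := (Int.mul_ediv_add_emod i P).symm
        nlinarith [h3]
      rw [e1, Int.add_mul_emod_self_left, Int.emod_eq_of_lt (by omega) (by omega)]
    rw [h2]
    refine ⟨F_odd_hi m _ hm hm1 hn hlt, F_odd_lo m _ hm (by omega) (by omega)⟩

/-- For m odd, x₁ even, y₁ even, the word repeating (ab)^((m-1)/2) (ac)^((m-1)/2) avoids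
{b⋄^(m-2)b, c⋄^(m-2)c, a⋄^(m-2)b, a⋄^(m-2)c, a⋄^(x₁)a⋄^(x₂)a, b⋄^(y₁)c⋄^(y₂)c}. -/
theorem stmt_11 (m x₁ x₂ y₁ y₂ : ℕ) (hm : 4 ≤ m) (hmo : Odd m)
    (hx₁ : 1 ≤ x₁) (hx₂ : 1 ≤ x₂) (hy₁ : 1 ≤ y₁) (hy₂ : 1 ≤ y₂)
    (hsx : x₁ + x₂ = m - 3) (hsy : y₁ + y₂ = m - 3)
    (hxe : Even x₁) (hye : Even y₁) :
    ∀ u ∈ ({oneHole m b b, oneHole m c c, oneHole m a b, oneHole m a c,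
            twoDef m a a a (x₁ + 1), twoDef m b c c (y₁ + 1)} : Set (PW m ABC)),
      ¬ Meets (periodic (2 * (m - 1)) (fun n =>
        if n < m - 1 then (if n % 2 = 0 then a else b)
        else (if (n - (m - 1)) % 2 = 0 then a else c))) u := by
  have hm1 : (m - 1) % 2 = 0 := by obtain ⟨k, hk⟩ := hmo; omega
  have hxm : x₁ % 2 = 0 := Nat.even_iff.mp hxe
  have hym : y₁ % 2 = 0 := Nat.even_iff.mp hye
  intro u hu
  simp only [Set.mem_insert_iff, Set.mem_singleton_iff] at hu
  rcases hu with rfl | rfl | rfl | rfl | rfl | rfl <;> rintro ⟨i, h⟩ <;>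
    have him : i % 2 = 0 ∨ i % 2 = 1 := by omega
  · -- b ⋄ b
    have h0 : W m i = b := by
      have h' := h ⟨0, by omega⟩ b (by simp [oneHole]); simp at h'; exact h'
    have h2 : W m (i + ((m - 1 : ℕ) : ℤ)) = b :=
      h ⟨m - 1, by omega⟩ b (by simp only [oneHole]; rw [if_neg (by omega)]; simp)
    rcases him with hi | hi
    · have ha := even_case m hm hmo i hi
      rw [ha] at h0; exact absurd h0 (by decide)
    · rcases odd_case m hm hmo i hi with ⟨_, hc⟩ | ⟨hc, _⟩
      · rw [hc] at h2; exact absurd h2 (by decide)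
      · rw [hc] at h0; exact absurd h0 (by decide)
  · -- c ⋄ c
    have h0 : W m i = c := by
      have h' := h ⟨0, by omega⟩ c (by simp [oneHole]); simp at h'; exact h'
    have h2 : W m (i + ((m - 1 : ℕ) : ℤ)) = c :=
      h ⟨m - 1, by omega⟩ c (by simp only [oneHole]; rw [if_neg (by omega)]; simp)
    rcases him with hi | hi
    · have ha := even_case m hm hmo i hi
      rw [ha] at h0; exact absurd h0 (by decide)
    · rcases odd_case m hm hmo i hi with ⟨hc, _⟩ | ⟨_, hc⟩
      · rw [hc] at h0; exact absurd h0 (by decide)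
      · rw [hc] at h2; exact absurd h2 (by decide)
  · -- a ⋄ b
    have h0 : W m i = a := by
      have h' := h ⟨0, by omega⟩ a (by simp [oneHole]); simp at h'; exact h'
    have h2 : W m (i + ((m - 1 : ℕ) : ℤ)) = b :=
      h ⟨m - 1, by omega⟩ b (by simp only [oneHole]; rw [if_neg (by omega)]; simp)
    rcases him with hi | hi
    · have ha := even_case m hm hmo (i + ((m - 1 : ℕ) : ℤ)) (by omega)
      rw [ha] at h2; exact absurd h2 (by decide)
    · rcases odd_case m hm hmo i hi with ⟨hc, _⟩ | ⟨hc, _⟩ <;>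
        (rw [hc] at h0; exact absurd h0 (by decide))
  · -- a ⋄ c
    have h0 : W m i = a := by
      have h' := h ⟨0, by omega⟩ a (by simp [oneHole]); simp at h'; exact h'
    have h2 : W m (i + ((m - 1 : ℕ) : ℤ)) = c :=
      h ⟨m - 1, by omega⟩ c (by simp only [oneHole]; rw [if_neg (by omega)]; simp)
    rcases him with hi | hi
    · have ha := even_case m hm hmo (i + ((m - 1 : ℕ) : ℤ)) (by omega)
      rw [ha] at h2; exact absurd h2 (by decide)
    · rcases odd_case m hm hmo i hi with ⟨hc, _⟩ | ⟨hc, _⟩ <;>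
        (rw [hc] at h0; exact absurd h0 (by decide))
  · -- a ⋄^x₁ a ⋄^x₂ a
    have h0 : W m i = a := by
      have h' := h ⟨0, by omega⟩ a (by simp [twoDef]); simp at h'; exact h'
    have h1 : W m (i + ((x₁ + 1 : ℕ) : ℤ)) = a :=
      h ⟨x₁ + 1, by omega⟩ a (by simp only [twoDef]; rw [if_neg (by omega)]; simp)
    rcases him with hi | hi
    · rcases odd_case m hm hmo (i + ((x₁ + 1 : ℕ) : ℤ)) (by omega) with ⟨hc, _⟩ | ⟨hc, _⟩ <;>
        (rw [hc] at h1; exact absurd h1 (by decide))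
    · rcases odd_case m hm hmo i hi with ⟨hc, _⟩ | ⟨hc, _⟩ <;>
        (rw [hc] at h0; exact absurd h0 (by decide))
  · -- b ⋄^y₁ c ⋄^y₂ c
    have h0 : W m i = b := by
      have h' := h ⟨0, by omega⟩ b (by simp [twoDef]); simp at h'; exact h'
    have h1 : W m (i + ((y₁ + 1 : ℕ) : ℤ)) = c :=
      h ⟨y₁ + 1, by omega⟩ c (by simp only [twoDef]; rw [if_neg (by omega)]; simp)
    rcases him with hi | hi
    · have ha := even_case m hm hmo i hi
      rw [ha] at h0; exact absurd h0 (by decide)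
    · have ha := even_case m hm hmo (i + ((y₁ + 1 : ℕ) : ℤ)) (by omega)
      rw [ha] at h1; exact absurd h1 (by decide)
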